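/- Let F be a field and let G = (V, E) be a directed graph such that for every ordered pair of nodes (u,v) there is a directed walk from u to v of length at most r. Let P_ℓ ⊆ {1,…,n} for ℓ ∈ V, and define Q_ℓ^(0) = P_ℓ and Q_ℓ^(i) = Q_ℓ^(i−1) ∪ ⋃_{v ∈ N_in(ℓ)} Q_v^(i−1). For each round i ∈ {1,…,r}, let τ_i be the minimum of Σ_{j∈V} rank(A_j) over all tuples (A_j)_{j∈V} of n×n matrices over F such that every entry of A_j in a column outside Q_j^(i−1) is zero, and such that for every ℓ ∈ V the matrix obtained by stacking the matrices A_j for j ∈ N_in(ℓ) together with the rows {e_m : m ∈ Q_ℓ^(i−1)} has rank equal to |Q_ℓ^(i)|. Then there exists a linear multi-round protocol with r rounds whose total number of transmissions equals Σ_{i=1}^r τ_i and such that K_ℓ^(r) contains e_j for every ℓ ∈ V and every j ∈ ⋃_{v∈V} P_v (in particular, all requests T_ℓ ⊆ {1,…,n} \ P_ℓ are satisfied). -/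

import Mathlib

open Matrix Submodule Module

section Aux
variable {F : Type*} [Field F] {n : ℕ}

lemma singles_eq (Q : Set (Fin n)) :
    {v : Fin n → F | ∃ m ∈ Q, v = Pi.single m 1} = (fun m => Pi.single m (1 : F)) '' Q := by
  ext v; simp [Set.mem_image, eq_comm]

lemma mem_span_singles {Q : Set (Fin n)} {v : Fin n → F} (h : ∀ q, q ∉ Q → v q = 0) :
    v ∈ span F ((fun m => Pi.single m (1 : F)) '' Q) := by
  have hv : v = ∑ i, Pi.single i (v i) := (Finset.univ_sum_single v).symm
  rw [hv]
  refine Submodule.sum_mem _ fun i _ => ?_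
  by_cases hi : i ∈ Q
  · have heq : Pi.single i (v i) = v i • (Pi.single i (1 : F) : Fin n → F) := by
      ext j; by_cases hj : j = i <;> simp [Pi.single_apply, hj]
    rw [heq]
    exact Submodule.smul_mem _ _ (subset_span ⟨i, hi, rfl⟩)
  · simp [h i hi]

lemma finrank_span_singles (Q : Set (Fin n)) :
    finrank F (span F ((fun m => Pi.single m (1 : F)) '' Q)) = Q.ncard := by
  classical
  have fin : Fintype Q := Q.toFinite.fintype
  have li0 : LinearIndependent F (fun i : Fin n => (Pi.single i (1 : F) : Fin n → F)) := by
    have h := (Pi.basisFun F (Fin n)).linearIndependent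
    have hfun : ⇑(Pi.basisFun F (Fin n)) = fun i : Fin n => (Pi.single i (1 : F) : Fin n → F) :=
      funext fun i => Pi.basisFun_apply F (Fin n) i
    rwa [hfun] at h
  have li : LinearIndependent F (fun m : Q => (Pi.single (m : Fin n) (1 : F) : Fin n → F)) :=
    li0.comp ((↑) : Q → Fin n) Subtype.val_injective
  rw [Set.image_eq_range, finrank_span_eq_card li]
  rw [Set.ncard_eq_toFinset_card', Set.toFinset_card]

lemma exists_finset_span (W : Submodule F (Fin n → F)) :
    ∃ s : Finset (Fin n → F), s.card = finrank F W ∧ (s : Set (Fin n → F)) ⊆ W ∧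
      span F (s : Set (Fin n → F)) = W := by
  classical
  let b := finBasis F W
  have hinj : Function.Injective fun k => ((b k : W) : Fin n → F) :=
    fun k1 k2 h => b.injective (Subtype.val_injective h)
  refine ⟨Finset.image (fun k => ((b k : W) : Fin n → F)) Finset.univ, ?_, ?_, ?_⟩
  · rw [Finset.card_image_of_injective _ hinj, Finset.card_univ, Fintype.card_fin]
  · intro x hx
    simp only [Finset.coe_image, Set.mem_image] at hx
    obtain ⟨k, _, rfl⟩ := hx
    exact (b k).2
  · rw [Finset.coe_image, Finset.coe_univ, Set.image_univ,
      show (fun k => ((b k : W) : Fin n → F)) = (W.subtype : W → Fin n → F) ∘ b from rfl,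
      Set.range_comp, Submodule.span_image, b.span_eq, Submodule.map_top,
      Submodule.range_subtype]

end Aux

/-- `WalkLen E m u v` : there is a directed walk of length `m` from `u` to `v` in the
directed graph with edge relation `E` (a walk of length `0` goes from a node to itself). -/
def WalkLen {V : Type*} (E : V → V → Prop) (m : ℕ) (u v : V) : Prop :=
  ∃ w : ℕ → V, w 0 = u ∧ w m = v ∧ ∀ t < m, E (w t) (w (t + 1))

/-- The knowledge subspaces of a linear multi-round protocol: `S i ℓ` is the finite set of
vectors broadcast by node `ℓ` in round `i + 1`; `knowledge E P S i ℓ ⊆ F^n` is the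
subspace known to node `ℓ` after `i` rounds, starting from
`K_ℓ^(0) = span {e_j : j ∈ P ℓ}` and adding, in each round, the span of everything
transmitted by the in-neighbors of `ℓ`. -/
def knowledge {F V : Type*} [Field F] {n : ℕ} (E : V → V → Prop)
    (P : V → Set (Fin n)) (S : ℕ → V → Finset (Fin n → F)) :
    ℕ → V → Submodule F (Fin n → F)
  | 0, ℓ => Submodule.span F {v | ∃ j ∈ P ℓ, v = Pi.single j 1}
  | (i + 1), ℓ => knowledge E P S i ℓ ⊔
      Submodule.span F (⋃ v ∈ {v | E v ℓ}, (S i v : Set (Fin n → F)))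

/-- `S` is a linear multi-round protocol with `r` rounds: in each round every node only
transmits vectors it knows, i.e. `S i ℓ ⊆ K_ℓ^(i)` (the set `S i ℓ` being what `ℓ`
broadcasts in round `i + 1`). -/
def IsProtocol {F V : Type*} [Field F] {n : ℕ} (E : V → V → Prop)
    (P : V → Set (Fin n)) (S : ℕ → V → Finset (Fin n → F)) (r : ℕ) : Prop :=
  ∀ i < r, ∀ ℓ, (S i ℓ : Set (Fin n → F)) ⊆ knowledge E P S i ℓ

/-- Evolution of possession sets under full forwarding: `Qset E P 0 ℓ = P ℓ` and after
each round every node's possession becomes the union of its own and its in-neighbors'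
previous possessions. -/
def Qset {V : Type*} {n : ℕ} (E : V → V → Prop) (P : V → Set (Fin n)) :
    ℕ → V → Set (Fin n)
  | 0, ℓ => P ℓ
  | (i + 1), ℓ => Qset E P i ℓ ∪ ⋃ v ∈ {v | E v ℓ}, Qset E P i v

/-- Suppose every ordered pair of nodes is joined by a directed walk of
length at most `r`, and the graph has a self-loop at every node. For each round
`i + 1 ∈ {1,…,r}`, let `τ i` be the minimum of `Σ_{j ∈ V} rank (A j)` over all tuples
`(A j)_{j ∈ V}` of `n × n` matrices over `F` such that every entry of `A j` in a column
outside `Q_j^(i)` is zero, and such that for every `ℓ ∈ V` the matrix obtained by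
stacking the matrices `A j` for `j ∈ N_in(ℓ)` together with the rows
`{e_m : m ∈ Q_ℓ^(i)}` has rank equal to `|Q_ℓ^(i+1)|`. Then there exists a linear
multi-round protocol with `r` rounds whose total number of transmissions equals
`Σ_{i=0}^{r-1} τ i` and such that `K_ℓ^(r)` contains `e_j` for every `ℓ ∈ V` and every
`j ∈ ⋃_{v ∈ V} P v` (in particular, all requests `T ℓ ⊆ {1,…,n} \ P ℓ` are
satisfied). -/
theorem exists_protocol_sum_minrank {F V : Type*} [Field F] [Fintype V] {n r : ℕ}
    (E : V → V → Prop) (hself : ∀ ℓ, E ℓ ℓ) (P : V → Set (Fin n))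
    (hconn : ∀ u v : V, ∃ m ≤ r, WalkLen E m u v)
    (τ : ℕ → ℕ)
    (hτ : ∀ i, τ i = sInf {t : ℕ | ∃ A : V → Matrix (Fin n) (Fin n) F,
      (∀ j : V, ∀ p q, q ∉ Qset E P i j → A j p q = 0) ∧
      (∀ ℓ : V, Module.finrank F (Submodule.span F
          ((⋃ j ∈ {v | E v ℓ}, Set.range (A j)) ∪
            {v | ∃ m ∈ Qset E P i ℓ, v = Pi.single m 1}))
        = (Qset E P (i + 1) ℓ).ncard) ∧
      t = ∑ j, (A j).rank}) :
    ∃ S : ℕ → V → Finset (Fin n → F), IsProtocol E P S r ∧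
      (∑ i ∈ Finset.range r, ∑ ℓ, (S i ℓ).card = ∑ i ∈ Finset.range r, τ i) ∧
      ∀ ℓ : V, ∀ j ∈ ⋃ v : V, P v,
        Pi.single j (1 : F) ∈ knowledge E P S r ℓ := by
  classical
  -- basic facts about Qset
  have Qsucc : ∀ i ℓ, Qset E P (i + 1) ℓ =
      Qset E P i ℓ ∪ ⋃ v ∈ {v | E v ℓ}, Qset E P i v := fun i ℓ => rfl
  have Qself : ∀ i ℓ, Qset E P i ℓ ⊆ Qset E P (i + 1) ℓ := by
    intro i ℓ; rw [Qsucc]; exact Set.subset_union_left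
  have Qnbr : ∀ i {v ℓ : V}, E v ℓ → Qset E P i v ⊆ Qset E P (i + 1) ℓ := by
    intro i v ℓ hE; rw [Qsucc]
    exact fun x hx => Set.mem_union_right _ (Set.mem_biUnion hE hx)
  have Qmono : ∀ {i i' : ℕ}, i ≤ i' → ∀ ℓ, Qset E P i ℓ ⊆ Qset E P i' ℓ := by
    intro i i' h
    induction i' with
    | zero => intro ℓ; rw [Nat.le_zero.mp h]
    | succ k ih =>
      intro ℓ
      rcases Nat.lt_or_ge i (k + 1) with hlt | hge
      · exact (ih (Nat.lt_succ_iff.mp hlt) ℓ).trans (Qself k ℓ)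
      · rw [Nat.le_antisymm h hge]
  -- choose optimal matrices for every round
  have hA : ∀ i, ∃ A : V → Matrix (Fin n) (Fin n) F,
      (∀ j : V, ∀ p q, q ∉ Qset E P i j → A j p q = 0) ∧
      (∀ ℓ : V, Module.finrank F (Submodule.span F
          ((⋃ j ∈ {v | E v ℓ}, Set.range (A j)) ∪
            {v | ∃ m ∈ Qset E P i ℓ, v = Pi.single m 1}))
        = (Qset E P (i + 1) ℓ).ncard) ∧
      τ i = ∑ j, (A j).rank := by
    intro i
    -- the full-forwarding witness
    set A0 : V → Matrix (Fin n) (Fin n) F :=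
      fun j => Matrix.of fun p q => if p = q ∧ p ∈ Qset E P i j then 1 else 0 with hA0
    have hcols0 : ∀ j : V, ∀ p q, q ∉ Qset E P i j → A0 j p q = 0 := by
      intro j p q hq
      simp only [hA0, Matrix.of_apply]
      rw [if_neg]; rintro ⟨rfl, hp⟩; exact hq hp
    have hrank0 : ∀ ℓ : V, Module.finrank F (Submodule.span F
          ((⋃ j ∈ {v | E v ℓ}, Set.range (A0 j)) ∪
            {v | ∃ m ∈ Qset E P i ℓ, v = Pi.single m 1}))
        = (Qset E P (i + 1) ℓ).ncard := by
      intro ℓ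
      have hspan : Submodule.span F
          ((⋃ j ∈ {v | E v ℓ}, Set.range (A0 j)) ∪
            {v | ∃ m ∈ Qset E P i ℓ, v = Pi.single m 1})
          = span F ((fun m => Pi.single m (1 : F)) '' Qset E P (i + 1) ℓ) := by
        apply le_antisymm
        · rw [span_le]
          rintro v (hv | hv)
          · simp only [Set.mem_iUnion, Set.mem_setOf_eq] at hv
            obtain ⟨j, hj, p, rfl⟩ := hv
            apply mem_span_singles
            intro q hq
            apply hcols0 j p q
            exact fun hqQ => hq (Qnbr i hj hqQ)
          · obtain ⟨m, hm, rfl⟩ := hv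
            exact subset_span ⟨m, Qself i ℓ hm, rfl⟩
        · rw [span_le]
          rintro v ⟨m, hm, rfl⟩
          apply subset_span
          rw [Qsucc] at hm
          rcases hm with hm | hm
          · exact Or.inr ⟨m, hm, rfl⟩
          · simp only [Set.mem_iUnion, Set.mem_setOf_eq] at hm
            obtain ⟨j, hj, hmj⟩ := hm
            refine Or.inl ?_
            simp only [Set.mem_iUnion, Set.mem_setOf_eq]
            refine ⟨j, hj, ⟨m, ?_⟩⟩
            ext q
            simp only [hA0, Matrix.of_apply]
            by_cases hq : q = m
            · subst hq; simp [hmj]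
            · simp [Pi.single_apply, hq, Ne.symm hq]
      rw [hspan, finrank_span_singles]
    have hne : {t : ℕ | ∃ A : V → Matrix (Fin n) (Fin n) F,
        (∀ j : V, ∀ p q, q ∉ Qset E P i j → A j p q = 0) ∧
        (∀ ℓ : V, Module.finrank F (Submodule.span F
            ((⋃ j ∈ {v | E v ℓ}, Set.range (A j)) ∪
              {v | ∃ m ∈ Qset E P i ℓ, v = Pi.single m 1}))
          = (Qset E P (i + 1) ℓ).ncard) ∧
        t = ∑ j, (A j).rank}.Nonempty :=
      ⟨∑ j, (A0 j).rank, A0, hcols0, hrank0, rfl⟩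
    have hmem := Nat.sInf_mem hne
    rw [← hτ i] at hmem
    exact hmem
  choose A hcols hrank hτA using hA
  -- choose finite spanning sets for the row spaces
  have hSex : ∀ (i : ℕ) (j : V), ∃ s : Finset (Fin n → F),
      s.card = finrank F (span F (Set.range (A i j))) ∧
      (s : Set (Fin n → F)) ⊆ span F (Set.range (A i j)) ∧
      span F (s : Set (Fin n → F)) = span F (Set.range (A i j)) :=
    fun i j => exists_finset_span _
  choose S hScard hSsub hSspan using hSex
  have Ksucc : ∀ i ℓ, knowledge E P S (i + 1) ℓ = knowledge E P S i ℓ ⊔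
      Submodule.span F (⋃ v ∈ {v | E v ℓ}, (S i v : Set (Fin n → F))) := fun i ℓ => rfl
  -- rows of A i j lie in the span of standard vectors of Qset i j
  have hrow : ∀ i (j : V) (p : Fin n),
      A i j p ∈ span F ((fun m => Pi.single m (1 : F)) '' Qset E P i j) := by
    intro i j p
    exact mem_span_singles fun q hq => hcols i j p q hq
  have hrowspace : ∀ i (j : V),
      span F (Set.range (A i j)) ≤ span F ((fun m => Pi.single m (1 : F)) '' Qset E P i j) := by
    intro i j
    rw [span_le]
    rintro v ⟨p, rfl⟩
    exact hrow i j p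
  -- key invariant
  have hkey : ∀ i ℓ, span F ((fun m => Pi.single m (1 : F)) '' Qset E P i ℓ)
      ≤ knowledge E P S i ℓ := by
    intro i
    induction i with
    | zero =>
      intro ℓ
      rw [show knowledge E P S 0 ℓ =
        span F {v | ∃ j ∈ P ℓ, v = Pi.single j 1} from rfl, singles_eq]
      exact le_of_eq rfl
    | succ i ih =>
      intro ℓ
      have hle : span F ((⋃ j ∈ {v | E v ℓ}, Set.range (A i j)) ∪
            {v | ∃ m ∈ Qset E P i ℓ, v = Pi.single m 1})
          ≤ span F ((fun m => Pi.single m (1 : F)) '' Qset E P (i + 1) ℓ) := by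
        rw [span_le]
        rintro v (hv | hv)
        · simp only [Set.mem_iUnion, Set.mem_setOf_eq] at hv
          obtain ⟨j, hj, p, rfl⟩ := hv
          apply mem_span_singles
          intro q hq
          exact hcols i j p q fun hqQ => hq (Qnbr i hj hqQ)
        · obtain ⟨m, hm, rfl⟩ := hv
          exact subset_span ⟨m, Qself i ℓ hm, rfl⟩
      have heq : span F ((⋃ j ∈ {v | E v ℓ}, Set.range (A i j)) ∪
            {v | ∃ m ∈ Qset E P i ℓ, v = Pi.single m 1})
          = span F ((fun m => Pi.single m (1 : F)) '' Qset E P (i + 1) ℓ) := by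
        apply Submodule.eq_of_le_of_finrank_le hle
        rw [finrank_span_singles, hrank i ℓ]
      rw [← heq, Ksucc, span_le]
      rintro v (hv | hv)
      · simp only [Set.mem_iUnion, Set.mem_setOf_eq] at hv
        obtain ⟨j, hj, p, rfl⟩ := hv
        have h1 : A i j p ∈ span F ((S i j : Set (Fin n → F))) := by
          rw [hSspan]; exact subset_span ⟨p, rfl⟩
        have h2 : span F ((S i j : Set (Fin n → F)))
            ≤ span F (⋃ v ∈ {v | E v ℓ}, (S i v : Set (Fin n → F))) := by
          apply span_mono
          intro x hx
          exact Set.mem_biUnion hj hx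
        exact Submodule.mem_sup_right (h2 h1)
      · obtain ⟨m, hm, rfl⟩ := hv
        exact Submodule.mem_sup_left (ih ℓ (subset_span ⟨m, hm, rfl⟩))
  refine ⟨S, ?_, ?_, ?_⟩
  · intro i _ ℓ v hv
    exact hkey i ℓ ((hrowspace i ℓ) (hSsub i ℓ hv))
  · refine Finset.sum_congr rfl fun i _ => ?_
    rw [hτA i]
    refine Finset.sum_congr rfl fun j _ => ?_
    rw [hScard i j, Matrix.rank_eq_finrank_span_row]
    rfl
  · intro ℓ j hj
    rw [Set.mem_iUnion] at hj
    obtain ⟨u, hu⟩ := hj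
    obtain ⟨m, hm, w, hw0, hwm, hwstep⟩ := hconn u ℓ
    have hwalk : ∀ t, t ≤ m → P u ⊆ Qset E P t (w t) := by
      intro t
      induction t with
      | zero => intro _; rw [hw0]; exact fun _ h => h
      | succ t iht =>
        intro ht
        exact (iht (Nat.le_of_succ_le ht)).trans (Qnbr t (hwstep t ht))
    have hjQ : j ∈ Qset E P r ℓ := by
      apply Qmono hm ℓ
      have := hwalk m le_rfl hu
      rwa [hwm] at this
    exact hkey r ℓ (subset_span ⟨j, hjQ, rfl⟩)
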